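/- Let D be an integral domain, M a prime ideal of D, and V a valuation overring of D that is the integral closure of the localization D_M in the fraction field of D. Then the set of prime ideals of D contained in M is linearly ordered by inclusion. -/

import Mathlib

set_option synthInstance.maxHeartbeats 1000000
set_option maxHeartbeats 1000000


theorem stmt1 (D K : Type*) [CommRing D] [IsDomain D] [Field K] [Algebra D K]
    [IsFractionRing D K] (M : Ideal D) [M.IsPrime] (V : ValuationSubring K)
    (hDV : ∀ d : D, algebraMap D K d ∈ V)
    (hV : V.toSubring =
      (integralClosure
        (Localization.subalgebra K M.primeCompl M.primeCompl_le_nonZeroDivisors) K).toSubring) :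
    IsChain (· ≤ ·) {P : Ideal D | P.IsPrime ∧ P ≤ M} := by
  set A := Localization.subalgebra K M.primeCompl M.primeCompl_le_nonZeroDivisors with hA
  set B := integralClosure A K with hB
  -- B is a valuation ring since it coincides with V
  have hmemVB : ∀ x : K, x ∈ V.toSubring ↔ x ∈ B.toSubring := fun x => by rw [hV]
  have hVR : PreValuationRing B := by
    refine ⟨fun a b => ?_⟩
    obtain ⟨c, hc⟩ := ValuationRing.cond (A := V)
      ⟨a.1, (hmemVB a.1).2 a.2⟩ ⟨b.1, (hmemVB b.1).2 b.2⟩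
    refine ⟨⟨c.1, (hmemVB c.1).1 c.2⟩, ?_⟩
    rcases hc with hc | hc
    · have hK : (a : K) * (c : K) = (b : K) := congrArg Subtype.val hc
      exact Or.inl (Subtype.ext hK)
    · have hK : (b : K) * (c : K) = (a : K) := congrArg Subtype.val hc
      exact Or.inr (Subtype.ext hK)
  haveI := hVR
  have htot : IsTotal (Ideal B) (· ≤ ·) := ValuationRing.le_total_ideal _
  -- the map A → B is injective
  have hinj : Function.Injective (algebraMap A B) := fun x y h => by
    have h1 := congrArg Subtype.val h
    exact Subtype.ext h1
  have hker : RingHom.ker (algebraMap A B) = ⊥ :=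
    (RingHom.injective_iff_ker_eq_bot _).mp hinj
  -- lying over for primes of A
  intro P hP Q hQ _
  obtain ⟨hPp, hPM⟩ := hP
  obtain ⟨hQp, hQM⟩ := hQ
  -- push P and Q to primes of A
  have hdisjP : Disjoint (M.primeCompl : Set D) (P : Set D) := by
    rw [Set.disjoint_left]
    intro x hx hxP
    exact hx (hPM hxP)
  have hdisjQ : Disjoint (M.primeCompl : Set D) (Q : Set D) := by
    rw [Set.disjoint_left]
    intro x hx hxQ
    exact hx (hQM hxQ)
  have hPA : (P.map (algebraMap D A)).IsPrime :=
    IsLocalization.isPrime_of_isPrime_disjoint M.primeCompl A P hPp hdisjP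
  have hQA : (Q.map (algebraMap D A)).IsPrime :=
    IsLocalization.isPrime_of_isPrime_disjoint M.primeCompl A Q hQp hdisjQ
  have hPc : (P.map (algebraMap D A)).comap (algebraMap D A) = P :=
    IsLocalization.comap_map_of_isPrime_disjoint M.primeCompl A (I := P) hPp hdisjP
  have hQc : (Q.map (algebraMap D A)).comap (algebraMap D A) = Q :=
    IsLocalization.comap_map_of_isPrime_disjoint M.primeCompl A (I := Q) hQp hdisjQ
  -- lift to primes of B
  haveI := hPA
  haveI := hQA
  obtain ⟨PB, hPBp, hPBc⟩ :=
    Ideal.exists_ideal_over_prime_of_isIntegral_of_isDomain (S := B)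
      (P.map (algebraMap D A)) (by rw [hker]; exact bot_le)
  obtain ⟨QB, hQBp, hQBc⟩ :=
    Ideal.exists_ideal_over_prime_of_isIntegral_of_isDomain (S := B)
      (Q.map (algebraMap D A)) (by rw [hker]; exact bot_le)
  -- compare
  rcases htot.total PB QB with h | h
  · left
    calc P = ((P.map (algebraMap D A)).comap (algebraMap D A)) := hPc.symm
      _ = (PB.comap (algebraMap A B)).comap (algebraMap D A) := by rw [hPBc]
      _ ≤ (QB.comap (algebraMap A B)).comap (algebraMap D A) :=
          Ideal.comap_mono (Ideal.comap_mono h)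
      _ = Q := by rw [hQBc, hQc]
  · right
    calc Q = ((Q.map (algebraMap D A)).comap (algebraMap D A)) := hQc.symm
      _ = (QB.comap (algebraMap A B)).comap (algebraMap D A) := by rw [hQBc]
      _ ≤ (PB.comap (algebraMap A B)).comap (algebraMap D A) :=
          Ideal.comap_mono (Ideal.comap_mono h)
      _ = P := by rw [hPBc, hPc]
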